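/- Let m, s, n be positive integers with n ≥ 3 and let r be a unit of Z_n with r^(ms) = ±1. Then the map Ψ given by ⟨i; (v_0, v_1, …, v_{s-1})⟩ ↦ ⟨-i; (r·v_{s-1}, r·v_{s-2}, …, r·v_1, r·v_0)⟩ is a graph isomorphism from CPMbar(m,s,n;r) to CPMbar(m,s,n;r^{-1}). In particular, CPMbar(m,s,n;r) and CPMbar(m,s,n;r^{-1}) are isomorphic graphs. -/

import Mathlib

/-- The graph `CPMbar(m,s,n;r)`: vertex set `Z_{ms} × (Z_n)^s`, where `⟨i;v⟩` is adjacent to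
`⟨i+1; v ± r^i · e_ℓ⟩` with `ℓ ≡ i (mod s)`. -/
def cpmBar (m s n : ℕ) (r : ZMod n) :
    SimpleGraph (ZMod (m * s) × (ZMod s → ZMod n)) :=
  SimpleGraph.fromRel (fun x y => ∃ ε : ZMod n, (ε = 1 ∨ ε = -1) ∧
    y.1 = x.1 + 1 ∧
    y.2 = x.2 + Pi.single (ZMod.castHom (dvd_mul_left s m) (ZMod s) x.1) (ε * r ^ x.1.val))

section aux

def baseRel (m s n : ℕ) (r : ZMod n) (x y : ZMod (m * s) × (ZMod s → ZMod n)) : Prop :=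
  ∃ ε : ZMod n, (ε = 1 ∨ ε = -1) ∧
    y.1 = x.1 + 1 ∧
    y.2 = x.2 + Pi.single (ZMod.castHom (dvd_mul_left s m) (ZMod s) x.1) (ε * r ^ x.1.val)

lemma cpmBar_eq (m s n : ℕ) (r : ZMod n) :
    cpmBar m s n r = SimpleGraph.fromRel (baseRel m s n r) := rfl

def psiMap (m s n : ℕ) (r : ZMod n) :
    ZMod (m * s) × (ZMod s → ZMod n) → ZMod (m * s) × (ZMod s → ZMod n) :=
  fun x => (-x.1, fun j => r * x.2 (-1 - j))

lemma valsum (N : ℕ) [NeZero N] (a : ZMod N) : a.val + (-1 - a).val + 1 = N := by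
  have h1 : ((a.val + (-1 - a).val + 1 : ℕ) : ZMod N) = 0 := by
    push_cast [ZMod.natCast_val, ZMod.cast_id]; ring
  have h2 := (ZMod.natCast_eq_zero_iff _ N).mp h1
  have ha := a.val_lt
  have hb := (-1 - a).val_lt
  obtain ⟨k, hk⟩ := h2
  rcases k with _ | _ | k
  · omega
  · omega
  · have : N * (k + 1 + 1) ≥ N * 2 := Nat.mul_le_mul_left N (by omega)
    omega

lemma psi_psi (m s n : ℕ) (a b : ZMod n) (hab : b * a = 1)
    (x : ZMod (m * s) × (ZMod s → ZMod n)) :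
    psiMap m s n b (psiMap m s n a x) = x := by
  unfold psiMap
  refine Prod.ext (by simp) ?_
  funext j
  simp only [sub_sub_cancel, ← mul_assoc, hab, one_mul]

lemma key (m s n : ℕ) [NeZero (m * s)] (r : ZMod n) (hu : IsUnit r)
    (hr : r ^ (m * s) = 1 ∨ r ^ (m * s) = -1)
    (x y : ZMod (m * s) × (ZMod s → ZMod n)) (h : baseRel m s n r x y) :
    baseRel m s n r⁻¹ (psiMap m s n r y) (psiMap m s n r x) := by
  obtain ⟨ε, hε, h1, h2⟩ := h
  have hru : r * r⁻¹ = 1 := ZMod.mul_inv_of_unit r hu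
  set a := x.1 with ha
  set ℓ := ZMod.castHom (dvd_mul_left s m) (ZMod s) a with hℓ
  refine ⟨-ε * r ^ (m * s), ?_, ?_, ?_⟩
  · rcases hε with h | h <;> rcases hr with h' | h' <;> rw [h, h'] <;> simp
  · show -a = -y.1 + 1
    rw [h1]; ring
  · have hfst : (psiMap m s n r y).1 = -1 - a := by
      show -y.1 = -1 - a
      rw [h1]; ring
    have hcast : ZMod.castHom (dvd_mul_left s m) (ZMod s) (-1 - a) = -1 - ℓ := by
      rw [map_sub, map_neg, map_one, hℓ]
    have hvs := valsum (m * s) a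
    have hpow : r ^ (m * s) = r ^ (a.val + 1) * r ^ ((-1 - a).val) := by
      rw [← pow_add]; congr 1; omega
    have hval : -ε * r ^ (m * s) * (r⁻¹) ^ ((-1 - a).val) = -(r * (ε * r ^ a.val)) := by
      rw [hpow, pow_succ]
      calc -ε * (r ^ a.val * r * r ^ (-1 - a).val) * r⁻¹ ^ (-1 - a).val
          = -ε * (r ^ a.val * r) * (r * r⁻¹) ^ (-1 - a).val := by
            rw [mul_pow]; ring
        _ = -(r * (ε * r ^ a.val)) := by rw [hru, one_pow]; ring
    rw [hfst, hcast, hval]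
    funext j
    simp only [psiMap, Pi.add_apply]
    rw [h2]
    simp only [Pi.add_apply, mul_add]
    rw [Pi.single_apply, Pi.single_apply]
    have hiff : (-1 - j : ZMod s) = ℓ ↔ j = -1 - ℓ := by
      constructor <;> intro h <;> [skip; rw [h]] <;> [rw [← h]; ring] <;> ring
    split_ifs with h' h'' h''
    · ring
    · exact absurd (hiff.mp h') h''
    · exact absurd (hiff.mpr h'') h'
    · ring

end aux

/-- the map Psi : <i;(v_0,...,v_{s-1})> ↦ <-i;(r v_{s-1},...,r v_0)> is a graph
isomorphism from CPMbar(m,s,n;r) to CPMbar(m,s,n;r⁻¹); in particular the graphs are isomorphic. -/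
theorem stmt5 (m s n : ℕ) (hm : 0 < m) (hs : 0 < s) (hn : 3 ≤ n)
    (r : ZMod n) (hu : IsUnit r) (hr : r ^ (m * s) = 1 ∨ r ^ (m * s) = -1) :
    let Ψ : ZMod (m * s) × (ZMod s → ZMod n) → ZMod (m * s) × (ZMod s → ZMod n) :=
      fun x => (-x.1, fun j => r * x.2 (-1 - j))
    (Function.Bijective Ψ ∧
      ∀ x y, (cpmBar m s n r).Adj x y ↔ (cpmBar m s n r⁻¹).Adj (Ψ x) (Ψ y)) ∧
    Nonempty (cpmBar m s n r ≃g cpmBar m s n r⁻¹) := by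
  intro Ψ
  haveI : NeZero (m * s) := ⟨(Nat.mul_pos hm hs).ne'⟩
  have hΨ : Ψ = psiMap m s n r := rfl
  have hru : r * r⁻¹ = 1 := ZMod.mul_inv_of_unit r hu
  have hur : r⁻¹ * r = 1 := ZMod.inv_mul_of_unit r hu
  have hu' : IsUnit r⁻¹ := IsUnit.of_mul_eq_one _ hur
  have hinv : (r⁻¹)⁻¹ = r := by
    have h1 := ZMod.mul_inv_of_unit r⁻¹ hu'
    calc (r⁻¹)⁻¹ = (r * r⁻¹) * (r⁻¹)⁻¹ := by rw [hru, one_mul]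
      _ = r * (r⁻¹ * (r⁻¹)⁻¹) := by ring
      _ = r := by rw [h1, mul_one]
  have hr' : (r⁻¹) ^ (m * s) = 1 ∨ (r⁻¹) ^ (m * s) = -1 := by
    have hp : r ^ (m * s) * (r⁻¹) ^ (m * s) = 1 := by
      rw [← mul_pow, hru, one_pow]
    rcases hr with h | h
    · left; rwa [h, one_mul] at hp
    · right
      rw [h] at hp
      calc (r⁻¹) ^ (m * s) = -(-1 * (r⁻¹) ^ (m * s)) := by ring
        _ = -1 := by rw [hp]
  -- the equivalence
  let e : (ZMod (m * s) × (ZMod s → ZMod n)) ≃ (ZMod (m * s) × (ZMod s → ZMod n)) :=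
    { toFun := psiMap m s n r
      invFun := psiMap m s n r⁻¹
      left_inv := psi_psi m s n r r⁻¹ hur
      right_inv := psi_psi m s n r⁻¹ r hru }
  have hrel : ∀ x y, baseRel m s n r x y ↔
      baseRel m s n r⁻¹ (psiMap m s n r y) (psiMap m s n r x) := by
    intro x y
    constructor
    · exact key m s n r hu hr x y
    · intro h
      have := key m s n (r⁻¹) hu' hr' _ _ h
      rwa [hinv, psi_psi m s n r r⁻¹ hur, psi_psi m s n r r⁻¹ hur] at this
  have hadj : ∀ x y, (cpmBar m s n r).Adj x y ↔
      (cpmBar m s n r⁻¹).Adj (psiMap m s n r x) (psiMap m s n r y) := by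
    intro x y
    rw [cpmBar_eq, cpmBar_eq, SimpleGraph.fromRel_adj, SimpleGraph.fromRel_adj]
    constructor
    · rintro ⟨hne, h | h⟩
      · exact ⟨fun hc => hne (e.injective hc), Or.inr ((hrel x y).mp h)⟩
      · exact ⟨fun hc => hne (e.injective hc), Or.inl ((hrel y x).mp h)⟩
    · rintro ⟨hne, h | h⟩
      · exact ⟨fun hc => hne (congrArg (psiMap m s n r) hc),
          Or.inr ((hrel y x).mpr h)⟩
      · exact ⟨fun hc => hne (congrArg (psiMap m s n r) hc),
          Or.inl ((hrel x y).mpr h)⟩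
  refine ⟨⟨?_, ?_⟩, ?_⟩
  · rw [hΨ]; exact e.bijective
  · intro x y; rw [hΨ]; exact hadj x y
  · exact ⟨⟨e, fun {x y} => (hadj x y).symm⟩⟩
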